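/- Let 0 < ε ≤ 1/5, let k = ⌊1/ε⌋, and let u ∈ U(n) for some n. Then there exist unitary matrices u_{−k}, u_{−k+1}, …, u_k ∈ U(n) such that: (1) u₀ = 1; (2) ‖u_i − u_{i+1}‖ < 4ε for every i with −k ≤ i < k; and (3) u = u_{−k} · u_k⁻¹. -/

import Mathlib

/-- The operator norm (as operators on `ℂⁿ` with the `ℓ²` norm) of a complex matrix. -/
noncomputable def matOpNorm {N : Type*} [Fintype N] [DecidableEq N]
    (A : Matrix N N ℂ) : ℝ :=
  ‖Matrix.toEuclideanCLM (𝕜 := ℂ) (n := N) A‖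

open scoped Matrix.Norms.L2Operator

-- |e^{iθ} - 1| ≤ |θ|
lemma aux_exp_sub_one (θ : ℝ) : ‖Complex.exp (θ * Complex.I) - 1‖ ≤ |θ| := by
  have e1 : ((θ/2:ℝ):ℂ) * Complex.I + ((θ/2:ℝ):ℂ) * Complex.I = (θ:ℂ) * Complex.I := by
    push_cast; ring
  have e2 : ((θ/2:ℝ):ℂ) * Complex.I + -(((θ/2:ℝ):ℂ) * Complex.I) = 0 := by ring
  have h1 : Complex.exp (θ * Complex.I) - 1
      = Complex.exp ((θ/2 : ℝ) * Complex.I) *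
        (Complex.exp ((θ/2 : ℝ) * Complex.I) - Complex.exp (-((θ/2 : ℝ) * Complex.I))) := by
    rw [mul_sub, ← Complex.exp_add, ← Complex.exp_add, e1, e2, Complex.exp_zero]
  have h2 : Complex.exp ((θ/2 : ℝ) * Complex.I) - Complex.exp (-((θ/2 : ℝ) * Complex.I))
      = 2 * Complex.sin ((θ/2 : ℝ)) * Complex.I := by
    rw [Complex.sin]
    ring_nf
    rw [Complex.I_sq]
    ring
  rw [h1, h2, norm_mul, Complex.norm_exp_ofReal_mul_I, one_mul, norm_mul, norm_mul,
    Complex.norm_I, mul_one, Complex.norm_two, ← Complex.ofReal_sin, Complex.norm_real, Real.norm_eq_abs]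
  calc 2 * |Real.sin (θ/2)| ≤ 2 * |θ/2| :=
        mul_le_mul_of_nonneg_left Real.abs_sin_le_abs (by norm_num)
    _ = |θ| := by rw [abs_div]; simp; ring


section root
variable {n : ℕ}

noncomputable local instance : CStarAlgebra (Matrix (Fin n) (Fin n) ℂ) := Matrix.instCStarAlgebra

lemma exists_unitary_root (u : Matrix.unitaryGroup (Fin n) ℂ) (k : ℕ) (hk : 0 < k) :
    ∃ w : Matrix.unitaryGroup (Fin n) ℂ, w ^ (2 * k) = u ∧
      ‖(w : Matrix (Fin n) (Fin n) ℂ) - 1‖ ≤ Real.pi / k := by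
  set U : Matrix (Fin n) (Fin n) ℂ := (u : Matrix (Fin n) (Fin n) ℂ) with hUdef
  haveI : IsStarNormal U := isStarNormal_of_mem_unitary u.2
  have habs : ∀ z ∈ spectrum ℂ U, ‖z‖ = 1 := by
    intro z hz
    have := spectrum.subset_circle_of_unitary u.2 hz
    simpa using Metric.mem_sphere.mp this
  -- choose θ ∈ (0,1) with -exp(θ I) not in the spectrum
  obtain ⟨θ, hθmem, hθ⟩ :
      ∃ θ ∈ Set.Ioo (0:ℝ) 1, -Complex.exp (θ * Complex.I) ∉ spectrum ℂ U := by
    by_contra h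
    push_neg at h
    have hinj : Set.InjOn (fun θ : ℝ => -Complex.exp (θ * Complex.I)) (Set.Ioo 0 1) := by
      intro a ha b hb hab
      simp only [neg_inj] at hab
      rcases Complex.exp_eq_exp_iff_exists_int.mp hab with ⟨m, hm⟩
      have hm' : a = b + m * (2 * Real.pi) := by
        field_simp [Complex.ext_iff] at hm
        have h' : (a:ℂ) = ((b + m * (2 * Real.pi) : ℝ) : ℂ) := by rw [hm]; push_cast; ring
        exact_mod_cast h'
      have hm0 : m = 0 := by
        rcases ha with ⟨ha1, ha2⟩
        rcases hb with ⟨hb1, hb2⟩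
        rcases lt_trichotomy m 0 with h | h | h
        · exfalso
          have : (m : ℝ) ≤ -1 := by exact_mod_cast Int.le_sub_one_of_lt h
          nlinarith [Real.pi_gt_three]
        · exact h
        · exfalso
          have : (1 : ℝ) ≤ (m : ℝ) := by exact_mod_cast h
          nlinarith [Real.pi_gt_three]
      simp [hm0] at hm'
      linarith [hm']
    have hfin := Matrix.finite_spectrum (R := ℂ) U
    have : (Set.Ioo (0:ℝ) 1).Finite := by
      have hsub : (fun θ : ℝ => -Complex.exp (θ * Complex.I)) '' Set.Ioo 0 1 ⊆ spectrum ℂ U := by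
        rintro x ⟨θ, hθ, rfl⟩; exact h θ hθ
      have := hfin.subset hsub
      exact (Set.Finite.of_finite_image this hinj)
    exact (Set.Ioo_infinite (by norm_num)) this
  set c : ℂ := Complex.exp (θ * Complex.I) with hc
  have hcabs : ‖c‖ = 1 := Complex.norm_exp_ofReal_mul_I θ
  have hcne : c ≠ 0 := by
    intro h0
    rw [h0] at hcabs
    simp at hcabs
  set f : ℂ → ℂ := fun z => Complex.exp (((θ : ℂ) * Complex.I + Complex.log (z / c)) / (2 * k))
    with hf
  -- continuity on the spectrum
  have hslit : ∀ z ∈ spectrum ℂ U, z / c ∈ Complex.slitPlane := by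
    intro z hz
    have habs' : ‖z / c‖ = 1 := by
      rw [norm_div, habs z hz, hcabs]; norm_num
    rw [Complex.mem_slitPlane_iff]
    by_contra hcon
    push_neg at hcon
    obtain ⟨hre, him⟩ := hcon
    have hwre : |(z / c).re| = 1 := by
      have : ‖z / c‖ = |(z / c).re| := by
        rw [Complex.norm_def, Complex.normSq_apply, him]
        rw [← Real.sqrt_sq_eq_abs]
        ring_nf
      rw [← this, habs']
    have : (z / c).re = -1 := by
      rcases abs_eq (by norm_num : (0:ℝ) ≤ 1) |>.mp hwre with h | h
      · linarith
      · exact h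
    have hzc1 : z / c = -1 := by
      apply Complex.ext <;> simp [this, him]
    have : z = -c := by
      field_simp at hzc1
      linear_combination hzc1
    exact hθ (this ▸ hz)
  have hcont : ContinuousOn f (spectrum ℂ U) := by
    intro z hz
    have h1 : ContinuousAt (fun w : ℂ => w / c) z := continuousAt_id.div_const c
    have h2 : ContinuousAt Complex.log (z / c) := continuousAt_clog (hslit z hz)
    have h3 : ContinuousAt (fun w : ℂ => Complex.log (w / c)) z := ContinuousAt.comp (g := Complex.log) (x := z) h2 h1
    have h4 : ContinuousAt
        (fun w : ℂ => ((θ : ℂ) * Complex.I + Complex.log (w / c)) / (2 * (k : ℂ))) z :=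
      (continuousAt_const.add h3).div_const _
    exact (Complex.continuous_exp.continuousAt.comp h4).continuousWithinAt
  -- pointwise facts on the spectrum
  have hkne : ((2 * k : ℕ) : ℂ) ≠ 0 := Nat.cast_ne_zero.mpr (by omega)
  have hkne' : (2 * (k : ℂ)) ≠ 0 := by push_cast at hkne; exact_mod_cast hkne
  have hzc : ∀ z ∈ spectrum ℂ U, z / c ≠ 0 := by
    intro z hz
    have := habs z hz
    intro h0
    rw [div_eq_zero_iff] at h0
    rcases h0 with h0 | h0
    · rw [h0] at this; simp at this
    · exact hcne h0
  have hpow : ∀ z ∈ spectrum ℂ U, f z ^ (2 * k) = z := by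
    intro z hz
    have hfz : f z = Complex.exp (((θ : ℂ) * Complex.I + Complex.log (z / c)) / (2 * (k:ℂ))) :=
      rfl
    rw [hfz, ← Complex.exp_nat_mul]
    have hcast : ((2 * k : ℕ) : ℂ) * (((θ : ℂ) * Complex.I + Complex.log (z / c)) / (2 * (k:ℂ)))
        = (θ : ℂ) * Complex.I + Complex.log (z / c) := by
      push_cast
      field_simp [show (k:ℂ) ≠ 0 by exact_mod_cast hk.ne']
    rw [hcast, Complex.exp_add, Complex.exp_log (hzc z hz), ← hc]
    field_simp
  have hangle : ∀ z ∈ spectrum ℂ U,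
      f z = Complex.exp ((((θ + Complex.arg (z / c)) / (2 * k) : ℝ)) * Complex.I) := by
    intro z hz
    have habs' : ‖z / c‖ = 1 := by
      rw [norm_div, habs z hz, hcabs]; norm_num
    have hlog : Complex.log (z / c) = (Complex.arg (z / c) : ℂ) * Complex.I := by
      rw [Complex.log, habs', Real.log_one]
      simp
    rw [hf]
    simp only
    rw [hlog]
    congr 1
    push_cast
    ring
  have habsf : ∀ z ∈ spectrum ℂ U, ‖f z‖ = 1 := by
    intro z hz
    rw [hangle z hz, Complex.norm_exp_ofReal_mul_I]
  -- the candidate root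
  set W : Matrix (Fin n) (Fin n) ℂ := cfc f U with hW
  have hcontstar : ContinuousOn (fun z => star (f z)) (spectrum ℂ U) :=
    Complex.continuous_conj.comp_continuousOn hcont
  have hWstar : star W * W = 1 := by
    rw [hW, ← cfc_star f U, ← cfc_mul _ _ U hcontstar hcont]
    have : cfc (fun z => star (f z) * f z) U = cfc (fun _ : ℂ => (1 : ℂ)) U := by
      apply cfc_congr
      intro z hz
      have := habsf z hz
      simp only [RCLike.star_def, Complex.conj_mul']
      rw [this]
      norm_num
    rw [this, cfc_const_one ℂ U]
  have hWstar' : W * star W = 1 := by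
    rw [hW, ← cfc_star f U, ← cfc_mul _ _ U hcont hcontstar]
    have : cfc (fun z => f z * star (f z)) U = cfc (fun _ : ℂ => (1 : ℂ)) U := by
      apply cfc_congr
      intro z hz
      have := habsf z hz
      simp only [RCLike.star_def, Complex.mul_conj']
      rw [this]
      norm_num
    rw [this, cfc_const_one ℂ U]
  have hWmem : W ∈ Matrix.unitaryGroup (Fin n) ℂ := ⟨hWstar, hWstar'⟩
  refine ⟨⟨W, hWmem⟩, ?_, ?_⟩
  · have hpow' : W ^ (2 * k) = U := by
      rw [hW, ← cfc_pow f (2 * k) U hcont]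
      have : cfc (fun z => f z ^ (2 * k)) U = cfc (id : ℂ → ℂ) U := cfc_congr hpow
      rw [this, cfc_id ℂ U]
    exact Subtype.ext (by push_cast; exact hpow')
  · show ‖W - 1‖ ≤ Real.pi / k
    have hπk : (0:ℝ) ≤ Real.pi / k := by positivity
    rw [hW, ← cfc_const_one ℂ U, ← cfc_sub _ _ U hcont (continuousOn_const)]
    apply norm_cfc_le hπk
    intro z hz
    rw [hangle z hz]
    refine (aux_exp_sub_one _).trans ?_
    have hkpos : (0:ℝ) < k := by exact_mod_cast hk
    have h1 : |θ + Complex.arg (z / c)| ≤ 2 * Real.pi := by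
      have harg := Complex.abs_arg_le_pi (z / c)
      have hθ1 : |θ| ≤ 1 := by
        rw [abs_of_pos hθmem.1]; linarith [hθmem.2]
      have hpi : (1:ℝ) ≤ Real.pi := by linarith [Real.pi_gt_three]
      calc |θ + Complex.arg (z / c)| ≤ |θ| + |Complex.arg (z / c)| := abs_add_le _ _
        _ ≤ 2 * Real.pi := by linarith
    rw [abs_div, abs_of_pos (by positivity : (0:ℝ) < 2 * (k:ℝ)),
      div_le_div_iff₀ (by positivity) hkpos]
    nlinarith [h1, Real.pi_pos]

theorem stmt18 (ε : ℝ) (hε : 0 < ε) (hε' : ε ≤ 1 / 5) (n : ℕ)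
    (u : Matrix.unitaryGroup (Fin n) ℂ) :
    ∃ v : ℤ → Matrix.unitaryGroup (Fin n) ℂ,
      v 0 = 1 ∧
      (∀ i : ℤ, -(Nat.floor (1 / ε) : ℤ) ≤ i → i < (Nat.floor (1 / ε) : ℤ) →
        matOpNorm ((v i : Matrix (Fin n) (Fin n) ℂ) -
          (v (i + 1) : Matrix (Fin n) (Fin n) ℂ)) < 4 * ε) ∧
      u = v (-(Nat.floor (1 / ε) : ℤ)) * (v (Nat.floor (1 / ε) : ℤ))⁻¹ := by
  set k : ℕ := Nat.floor (1 / ε) with hkdef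
  have hk5 : 5 ≤ k := by
    apply Nat.le_floor
    rw [le_one_div (by norm_num) hε]
    push_cast
    linarith
  have hkpos : 0 < k := by omega
  have hkRpos : (0:ℝ) < k := by exact_mod_cast hkpos
  have hπ : Real.pi / k < 4 * ε := by
    have h1 : (1:ℝ) / ε < k + 1 := Nat.lt_floor_add_one (1 / ε)
    have h1' : 1 < ((k:ℝ) + 1) * ε := by
      rw [div_lt_iff₀ hε] at h1
      linarith
    rw [div_lt_iff₀ hkRpos]
    nlinarith [Real.pi_lt_d2]
  obtain ⟨w, hwpow, hwnorm⟩ := exists_unitary_root u k hkpos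
  refine ⟨fun i => w ^ (-i), by simp, ?_, ?_⟩
  · intro i _ _
    have hvi : w ^ (-i) = w ^ (-(i+1)) * w := by
      rw [← zpow_add_one]
      congr 1
      ring
    have hnorm_eq : matOpNorm (((w ^ (-i) : Matrix.unitaryGroup (Fin n) ℂ) : Matrix (Fin n) (Fin n) ℂ)
        - ((w ^ (-(i+1)) : Matrix.unitaryGroup (Fin n) ℂ) : Matrix (Fin n) (Fin n) ℂ))
        = ‖((w ^ (-i) : Matrix.unitaryGroup (Fin n) ℂ) : Matrix (Fin n) (Fin n) ℂ)
          - ((w ^ (-(i+1)) : Matrix.unitaryGroup (Fin n) ℂ) : Matrix (Fin n) (Fin n) ℂ)‖ := rfl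
    rw [hnorm_eq, hvi, MulMemClass.coe_mul]
    have hrw : ((w ^ (-(i+1)) : Matrix.unitaryGroup (Fin n) ℂ) : Matrix (Fin n) (Fin n) ℂ)
          * (w : Matrix (Fin n) (Fin n) ℂ)
        - ((w ^ (-(i+1)) : Matrix.unitaryGroup (Fin n) ℂ) : Matrix (Fin n) (Fin n) ℂ)
        = ((w ^ (-(i+1)) : Matrix.unitaryGroup (Fin n) ℂ) : Matrix (Fin n) (Fin n) ℂ)
          * ((w : Matrix (Fin n) (Fin n) ℂ) - 1) := by
      rw [mul_sub, mul_one]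
    rw [hrw, CStarRing.norm_coe_unitary_mul (w ^ (-(i+1)))
      ((w : Matrix (Fin n) (Fin n) ℂ) - 1)]
    exact lt_of_le_of_lt hwnorm hπ
  · show u = w ^ (-(-(k:ℤ))) * (w ^ (-(k:ℤ)))⁻¹
    rw [← hwpow, ← zpow_natCast w (2*k)]
    push_cast
    group

end root
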